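/- arXiv:1211.1247 — 3 statements merged into one kernel-verified Lean document; each statement's English description precedes it below -/
import Mathlib

section
/- Let G be a finite, connected graph that is not balanced bipartite (it admits no bipartition V = A ∪ B with #A = #B), and let α = 1. Then for every S ⊆ {1,…,m}, the restriction of L to the face Δ_S is strictly concave; consequently each Λ_S contains at most one point and Λ is finite. -/
open MeasureTheory Filter Topology

/-- The domain `Δ`: nonnegative vectors summing to `1` whose coordinates sum to at least `c`
on every edge of `G`. -/
def simplexDomain (m : ℕ) (G : SimpleGraph (Fin m)) (c : ℝ) : Set (Fin m → ℝ) :=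
  {x | (∀ i, 0 ≤ x i) ∧ (∑ i, x i) = 1 ∧ ∀ i j, G.Adj i j → c ≤ x i + x j}

/-- The vector field `F` of the urn process:
`F_i(x) = -x_i + (1/N) ∑_{j ∼ i} x_i^α / (x_i^α + x_j^α)`. -/
noncomputable def urnField (m : ℕ) (G : SimpleGraph (Fin m)) [DecidableRel G.Adj] (α : ℝ)
    (x : Fin m → ℝ) : Fin m → ℝ :=
  fun i => -x i + (1 / (G.edgeFinset.card : ℝ)) *
    ∑ j ∈ G.neighborFinset i, x i ^ α / (x i ^ α + x j ^ α)

/-- The equilibria set `Λ` of the vector field `F` on `Δ`. -/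
def equilibria (m : ℕ) (G : SimpleGraph (Fin m)) [DecidableRel G.Adj] (α c : ℝ) :
    Set (Fin m → ℝ) :=
  {x ∈ simplexDomain m G c | urnField m G α x = 0}

/-- The strict Lyapunov function
`L(v) = -∑ i, v i + (1/(αN)) ∑_{{i,j} ∈ E} log (v_i^α + v_j^α)`. -/
noncomputable def lyap (m : ℕ) (G : SimpleGraph (Fin m)) [DecidableRel G.Adj] (α : ℝ)
    (v : Fin m → ℝ) : ℝ :=
  -∑ i, v i + (1 / (α * (G.edgeFinset.card : ℝ))) *
    ∑ e ∈ G.edgeFinset,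
      Sym2.lift ⟨fun i j => Real.log (v i ^ α + v j ^ α), fun _ _ => congrArg Real.log (add_comm _ _)⟩ e

/-- The partial derivative `∂L/∂v_i (v) = -1 + (1/N) ∑_{j ∼ i} v_i^(α-1) / (v_i^α + v_j^α)`
of the Lyapunov function `L`. -/
noncomputable def lyapGrad (m : ℕ) (G : SimpleGraph (Fin m)) [DecidableRel G.Adj] (α : ℝ)
    (v : Fin m → ℝ) (i : Fin m) : ℝ :=
  -1 + (1 / (G.edgeFinset.card : ℝ)) *
    ∑ j ∈ G.neighborFinset i, v i ^ (α - 1) / (v i ^ α + v j ^ α)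

/-- The face `Δ_S` of `Δ` determined by `S`: the points of `Δ` vanishing exactly off `S`. -/
def faceDomain (m : ℕ) (G : SimpleGraph (Fin m)) (c : ℝ) (S : Finset (Fin m)) :
    Set (Fin m → ℝ) :=
  {v ∈ simplexDomain m G c | ∀ i, v i = 0 ↔ i ∉ S}

/-- The set `Λ_S` of `S`-singularities of `L`: points of `Δ_S` where `∂L/∂v_i = 0` for all
`i ∈ S`. -/
noncomputable def faceSingularities (m : ℕ) (G : SimpleGraph (Fin m)) [DecidableRel G.Adj]
    (α c : ℝ) (S : Finset (Fin m)) : Set (Fin m → ℝ) :=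
  {v ∈ faceDomain m G c S | ∀ i ∈ S, lyapGrad m G α v i = 0}


section Helpers

open Finset

variable {m : ℕ} {G : SimpleGraph (Fin m)} [DecidableRel G.Adj]

/-- symmetrize a sum over neighbor pairs -/
lemma nbr_swap_sum (f : Fin m → Fin m → ℝ) :
    ∑ i, ∑ j ∈ G.neighborFinset i, f i j = ∑ i, ∑ j ∈ G.neighborFinset i, f j i := by
  have h : ∀ (g : Fin m → Fin m → ℝ), ∑ i, ∑ j ∈ G.neighborFinset i, g i j
      = ∑ i, ∑ j, if G.Adj i j then g i j else 0 := by
    intro g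
    refine Finset.sum_congr rfl fun i _ => ?_
    rw [SimpleGraph.neighborFinset_eq_filter, Finset.sum_filter]
  rw [h, h, Finset.sum_comm]
  refine Finset.sum_congr rfl fun i _ => Finset.sum_congr rfl fun j _ => ?_
  exact if_congr (G.adj_comm j i) rfl rfl

omit [DecidableRel G.Adj] in
lemma key_rigid (hconn : G.Connected)
    (hnbb : ¬ ∃ A : Finset (Fin m), (∀ i j, G.Adj i j → (i ∈ A ↔ j ∉ A)) ∧ 2 * A.card = m)
    {x y : Fin m → ℝ} (hx1 : ∑ i, x i = 1) (hy1 : ∑ i, y i = 1)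
    (hE : ∀ i j, G.Adj i j → x i + x j = y i + y j) : x = y := by
  classical
  by_contra hne
  obtain ⟨i0, hi0⟩ : ∃ i, x i - y i ≠ 0 := by
    by_contra hall; push_neg at hall
    exact hne (funext fun i => by have := hall i; linarith)
  set d : Fin m → ℝ := fun i => x i - y i with hd
  set t := d i0 with htdef
  have ht : t ≠ 0 := hi0
  have hstep : ∀ u v, G.Adj u v → d v = -d u := by
    intro u v h
    have := hE u v h
    simp only [hd]
    linarith
  have hwalk : ∀ {u v : Fin m}, G.Walk u v → (d u = t ∨ d u = -t) → (d v = t ∨ d v = -t) := by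
    intro u v w
    induction w with
    | nil => exact id
    | cons h p ih =>
      intro hu
      refine ih ?_
      rcases hu with h1 | h1 <;> rw [hstep _ _ h, h1]
      · exact Or.inr rfl
      · exact Or.inl (neg_neg t)
  have hall : ∀ j, d j = t ∨ d j = -t := fun j =>
    ((hconn.preconnected i0 j).elim fun w => hwalk w (Or.inl rfl))
  set A : Finset (Fin m) := Finset.univ.filter (fun j => d j = t) with hA
  have hadjA : ∀ i j, G.Adj i j → (i ∈ A ↔ j ∉ A) := by
    intro i j hij
    have hj : d j = -d i := hstep i j hij
    simp only [hA, Finset.mem_filter, Finset.mem_univ, true_and]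
    rcases hall i with h1 | h1
    · rw [h1] at hj
      constructor
      · intro _ h2
        rw [hj] at h2
        exact ht (by linarith)
      · intro _; exact h1
    · rw [h1, neg_neg] at hj
      constructor
      · intro h2
        rw [h1] at h2
        exact absurd (by linarith : t = 0) ht
      · intro h2
        exact absurd hj h2
  have hsum : ∑ j, d j = 0 := by
    simp only [hd]
    rw [Finset.sum_sub_distrib, hx1, hy1, sub_self]
  have hsplit := Finset.sum_filter_add_sum_filter_not Finset.univ (fun j => d j = t) d
  have h1 : ∑ j ∈ Finset.univ.filter (fun j => d j = t), d j = (A.card : ℝ) * t := by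
    rw [Finset.sum_congr rfl (fun j hj => (Finset.mem_filter.1 hj).2)]
    rw [Finset.sum_const, nsmul_eq_mul, hA]
  have h2 : ∑ j ∈ Finset.univ.filter (fun j => ¬ d j = t), d j
      = ((Finset.univ.filter (fun j => ¬ d j = t)).card : ℝ) * (-t) := by
    rw [Finset.sum_congr rfl (fun j hj => ?_)]
    · rw [Finset.sum_const, nsmul_eq_mul]
    · rcases hall j with hjt | hjt
      · exact absurd hjt (Finset.mem_filter.1 hj).2
      · exact hjt
  have hcards : A.card = (Finset.univ.filter (fun j => ¬ d j = t)).card := by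
    have : (A.card : ℝ) * t = ((Finset.univ.filter (fun j => ¬ d j = t)).card : ℝ) * t := by
      rw [h1, h2] at hsplit
      rw [hsum] at hsplit
      nlinarith [hsplit]
    have := mul_right_cancel₀ ht this
    exact_mod_cast this
  have htot : A.card + (Finset.univ.filter (fun j => ¬ d j = t)).card = m := by
    rw [hA]
    rw [Finset.card_filter_add_card_filter_not]
    simp
  exact hnbb ⟨A, hadjA, by omega⟩

/-- edge-sum function on `Sym2` -/
noncomputable def esum (v : Fin m → ℝ) : Sym2 (Fin m) → ℝ :=
  Sym2.lift ⟨fun i j => v i + v j, fun _ _ => add_comm _ _⟩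

omit [DecidableRel G.Adj] in
lemma esum_mk (v : Fin m → ℝ) (i j : Fin m) : esum v s(i, j) = v i + v j := rfl

lemma lyap_one (v : Fin m → ℝ) :
    lyap m G 1 v = -∑ i, v i + (1 / (G.edgeFinset.card : ℝ)) *
      ∑ e ∈ G.edgeFinset, Real.log (esum v e) := by
  unfold lyap
  rw [one_mul]
  congr 1
  congr 1
  refine Finset.sum_congr rfl fun e _ => ?_
  induction e using Sym2.ind with
  | _ i j => simp [esum, Real.rpow_one]

omit [DecidableRel G.Adj] in
lemma esum_combo (a b : ℝ) (x y : Fin m → ℝ) (e : Sym2 (Fin m)) :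
    esum (a • x + b • y) e = a * esum x e + b * esum y e := by
  induction e using Sym2.ind with
  | _ i j => simp [esum]; ring

lemma esum_pos {c : ℝ} (hc : 0 < c) {v : Fin m → ℝ} (hv : v ∈ simplexDomain m G c)
    {e : Sym2 (Fin m)} (he : e ∈ G.edgeFinset) : 0 < esum v e := by
  induction e using Sym2.ind with
  | _ i j =>
    rw [SimpleGraph.mem_edgeFinset, SimpleGraph.mem_edgeSet] at he
    have := hv.2.2 i j he
    rw [esum_mk]
    linarith

lemma N_pos {c : ℝ} (hc : 0 < c) (hcN : c < 1 / (G.edgeFinset.card : ℝ)) :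
    (0 : ℝ) < (G.edgeFinset.card : ℝ) := by
  by_contra h
  push_neg at h
  have : (1 : ℝ) / (G.edgeFinset.card : ℝ) ≤ 0 := one_div_nonpos.2 h
  linarith

omit [DecidableRel G.Adj] in
lemma face_convex {c : ℝ} (S : Finset (Fin m)) : Convex ℝ (faceDomain m G c S) := by
  intro x hx y hy a b ha hb hab
  obtain ⟨⟨hxpos, hxsum, hxedge⟩, hxS⟩ := hx
  obtain ⟨⟨hypos, hysum, hyedge⟩, hyS⟩ := hy
  refine ⟨⟨fun i => ?_, ?_, fun i j hij => ?_⟩, fun i => ?_⟩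
  · have : (a • x + b • y) i = a * x i + b * y i := by simp
    rw [this]
    exact add_nonneg (mul_nonneg ha (hxpos i)) (mul_nonneg hb (hypos i))
  · have h : ∀ i, (a • x + b • y) i = a * x i + b * y i := fun i => by simp
    simp_rw [h]
    rw [Finset.sum_add_distrib, ← Finset.mul_sum, ← Finset.mul_sum, hxsum, hysum]
    simpa using hab
  · have h1 : (a • x + b • y) i + (a • x + b • y) j
        = a * (x i + x j) + b * (y i + y j) := by simp; ring
    rw [h1]
    have hxe := hxedge i j hij
    have hye := hyedge i j hij
    have hcc : a * c + b * c = c := by rw [← add_mul, hab, one_mul]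
    linarith [mul_le_mul_of_nonneg_left hxe ha, mul_le_mul_of_nonneg_left hye hb]
  · have h1 : (a • x + b • y) i = a * x i + b * y i := by simp
    rw [h1]
    constructor
    · intro h0
      by_contra hiS'
      have hiS : i ∈ S := hiS'
      have hx0 : 0 < x i := lt_of_le_of_ne (hxpos i) (fun h => (hxS i).1 h.symm hiS)
      have hy0 : 0 < y i := lt_of_le_of_ne (hypos i) (fun h => (hyS i).1 h.symm hiS)
      have hapos : 0 < a ∨ 0 < b := by
        rcases lt_or_eq_of_le ha with h | h
        · exact Or.inl h
        · right; rw [← h] at hab; linarith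
      rcases hapos with h | h <;> nlinarith
    · intro hiS
      rw [(hxS i).2 hiS, (hyS i).2 hiS]
      ring

/-- the ratio-sum identity at a face singularity -/
lemma ratio_sum {c : ℝ} (hc : 0 < c) (S : Finset (Fin m)) {x y : Fin m → ℝ}
    (hxF : x ∈ faceDomain m G c S) (hyF : y ∈ faceDomain m G c S)
    (hgx : ∀ i ∈ S, ∑ j ∈ G.neighborFinset i, 1 / (x i + x j) = (G.edgeFinset.card : ℝ)) :
    ∑ i, ∑ j ∈ G.neighborFinset i, ((y i + y j) / (x i + x j) - 1) = 0 := by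
  classical
  set N : ℝ := (G.edgeFinset.card : ℝ) with hNdef
  have hXp : ∀ i j, G.Adj i j → 0 < x i + x j := by
    intro i j hij
    have := hxF.1.2.2 i j hij
    linarith
  have hterm : ∀ i, ∑ j ∈ G.neighborFinset i, (y i - x i) / (x i + x j) = (y i - x i) * N := by
    intro i
    by_cases hi : i ∈ S
    · calc ∑ j ∈ G.neighborFinset i, (y i - x i) / (x i + x j)
          = (y i - x i) * ∑ j ∈ G.neighborFinset i, 1 / (x i + x j) := by
            rw [Finset.mul_sum]
            exact Finset.sum_congr rfl fun j _ => by ring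
        _ = (y i - x i) * N := by rw [hgx i hi]
    · rw [(hxF.2 i).2 hi, (hyF.2 i).2 hi]
      simp
  have hT : ∑ i, ∑ j ∈ G.neighborFinset i, (y i - x i) / (x i + x j) = 0 := by
    rw [Finset.sum_congr rfl fun i _ => hterm i, ← Finset.sum_mul, Finset.sum_sub_distrib,
      hyF.1.2.1, hxF.1.2.1]
    ring
  have hT' : ∑ i, ∑ j ∈ G.neighborFinset i, (y j - x j) / (x i + x j) = 0 := by
    have h := nbr_swap_sum (G := G) (fun i j => (y j - x j) / (x i + x j))
    rw [h]
    have h2 : ∀ i, ∀ j ∈ G.neighborFinset i,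
        (y i - x i) / (x j + x i) = (y i - x i) / (x i + x j) := fun i j _ => by rw [add_comm (x j)]
    rw [Finset.sum_congr rfl fun i _ => Finset.sum_congr rfl (h2 i)]
    exact hT
  have hsplit : ∀ i, ∀ j ∈ G.neighborFinset i,
      (y i + y j) / (x i + x j) - 1
        = (y i - x i) / (x i + x j) + (y j - x j) / (x i + x j) := by
    intro i j hj
    have hadj : G.Adj i j := (SimpleGraph.mem_neighborFinset G i j).1 hj
    have hp := hXp i j hadj
    field_simp
    ring
  rw [Finset.sum_congr rfl fun i _ => Finset.sum_congr rfl (hsplit i)]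
  simp_rw [Finset.sum_add_distrib]
  rw [hT, hT']
  ring

end Helpers

/-- For a finite, connected, not balanced bipartite graph and `α = 1`, the restriction of
`L` to every face `Δ_S` is strictly concave; consequently each `Λ_S` contains at most one
point and `Λ = ⋃_S Λ_S` is finite. -/
theorem lyap_strictly_concave_on_faces
    {m : ℕ} {G : SimpleGraph (Fin m)} [DecidableRel G.Adj] {c : ℝ}
    (hconn : G.Connected)
    (hnbb : ¬ ∃ A : Finset (Fin m), (∀ i j, G.Adj i j → (i ∈ A ↔ j ∉ A)) ∧ 2 * A.card = m)
    (hc : 0 < c) (hcN : c < 1 / (G.edgeFinset.card : ℝ)) :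
    (∀ S : Finset (Fin m), StrictConcaveOn ℝ (faceDomain m G c S) (lyap m G 1)) ∧
    (∀ S : Finset (Fin m), (faceSingularities m G 1 c S).Subsingleton) ∧
    (⋃ S : Finset (Fin m), faceSingularities m G 1 c S).Finite := by
  classical
  have hN : (0 : ℝ) < (G.edgeFinset.card : ℝ) := N_pos hc hcN
  have hNne : (G.edgeFinset.card : ℝ) ≠ 0 := ne_of_gt hN
  have hgradeq : ∀ (v : Fin m → ℝ) (i : Fin m), lyapGrad m G 1 v i
      = -1 + (1 / (G.edgeFinset.card : ℝ)) * ∑ j ∈ G.neighborFinset i, 1 / (v i + v j) := by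
    intro v i
    unfold lyapGrad
    norm_num [Real.rpow_one]
  have hsub : ∀ S : Finset (Fin m), (faceSingularities m G 1 c S).Subsingleton := by
    intro S x hx y hy
    obtain ⟨hxF, hxG⟩ := hx
    obtain ⟨hyF, hyG⟩ := hy
    have hgx : ∀ i ∈ S, ∑ j ∈ G.neighborFinset i, 1 / (x i + x j) = (G.edgeFinset.card : ℝ) := by
      intro i hi
      have h := hxG i hi
      rw [hgradeq] at h
      have h1 : (1 / (G.edgeFinset.card : ℝ)) * ∑ j ∈ G.neighborFinset i, 1 / (x i + x j) = 1 := by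
        linarith
      have h3 := congrArg (fun z => (G.edgeFinset.card : ℝ) * z) h1
      rw [← mul_assoc, mul_one_div_cancel hNne, one_mul, mul_one] at h3
      exact h3
    have hgy : ∀ i ∈ S, ∑ j ∈ G.neighborFinset i, 1 / (y i + y j) = (G.edgeFinset.card : ℝ) := by
      intro i hi
      have h := hyG i hi
      rw [hgradeq] at h
      have h1 : (1 / (G.edgeFinset.card : ℝ)) * ∑ j ∈ G.neighborFinset i, 1 / (y i + y j) = 1 := by
        linarith
      have h3 := congrArg (fun z => (G.edgeFinset.card : ℝ) * z) h1
      rw [← mul_assoc, mul_one_div_cancel hNne, one_mul, mul_one] at h3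
      exact h3
    have hUU := ratio_sum hc S hxF hyF hgx
    have hVV := ratio_sum hc S hyF hxF hgy
    have hXp : ∀ i j, G.Adj i j → 0 < x i + x j := by
      intro i j hij; have := hxF.1.2.2 i j hij; linarith
    have hYp : ∀ i j, G.Adj i j → 0 < y i + y j := by
      intro i j hij; have := hyF.1.2.2 i j hij; linarith
    have hterm_eq : ∀ i, ∀ j ∈ G.neighborFinset i,
        ((y i + y j) / (x i + x j) - 1) + ((x i + x j) / (y i + y j) - 1)
          = ((x i + x j) - (y i + y j)) ^ 2 / ((x i + x j) * (y i + y j)) := by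
      intro i j hj
      have hadj : G.Adj i j := (SimpleGraph.mem_neighborFinset G i j).1 hj
      have h1 := hXp i j hadj
      have h2 := hYp i j hadj
      field_simp
      ring
    have htot : ∑ i, ∑ j ∈ G.neighborFinset i,
        ((x i + x j) - (y i + y j)) ^ 2 / ((x i + x j) * (y i + y j)) = 0 := by
      rw [← Finset.sum_congr rfl fun i _ => Finset.sum_congr rfl (hterm_eq i)]
      simp_rw [Finset.sum_add_distrib]
      rw [hUU, hVV]
      ring
    have hnonneg : ∀ i ∈ Finset.univ, (0:ℝ) ≤ ∑ j ∈ G.neighborFinset i,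
        ((x i + x j) - (y i + y j)) ^ 2 / ((x i + x j) * (y i + y j)) := by
      intro i _
      refine Finset.sum_nonneg fun j hj => ?_
      have hadj : G.Adj i j := (SimpleGraph.mem_neighborFinset G i j).1 hj
      have h1 := hXp i j hadj
      have h2 := hYp i j hadj
      positivity
    have houter := (Finset.sum_eq_zero_iff_of_nonneg hnonneg).1 htot
    have hE : ∀ i j, G.Adj i j → x i + x j = y i + y j := by
      intro i j hadj
      have hj : j ∈ G.neighborFinset i := (SimpleGraph.mem_neighborFinset G i j).2 hadj
      have h1 := hXp i j hadj
      have h2 := hYp i j hadj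
      have hinner := (Finset.sum_eq_zero_iff_of_nonneg (fun j' hj' => by
        have hadj' : G.Adj i j' := (SimpleGraph.mem_neighborFinset G i j').1 hj'
        have := hXp i j' hadj'
        have := hYp i j' hadj'
        positivity)).1 (houter i (Finset.mem_univ i)) j hj
      have hden : (x i + x j) * (y i + y j) ≠ 0 := by positivity
      have hnum : ((x i + x j) - (y i + y j)) ^ 2 = 0 := by
        rcases div_eq_zero_iff.1 hinner with h | h
        · exact h
        · exact absurd h hden
      have := pow_eq_zero_iff (n := 2) (by norm_num) |>.1 hnum
      linarith
    exact key_rigid hconn hnbb hxF.1.2.1 hyF.1.2.1 hE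
  refine ⟨?_, hsub, Set.finite_iUnion fun S => (hsub S).finite⟩
  intro S
  refine ⟨face_convex S, ?_⟩
  intro x hx y hy hxy a b ha hb hab
  have hedge_ne : ∃ e ∈ G.edgeFinset, esum x e ≠ esum y e := by
    by_contra hcon
    push_neg at hcon
    refine hxy (key_rigid hconn hnbb hx.1.2.1 hy.1.2.1 fun i j hij => ?_)
    have := hcon s(i, j) (by rw [SimpleGraph.mem_edgeFinset, SimpleGraph.mem_edgeSet]; exact hij)
    simpa [esum_mk] using this
  obtain ⟨e0, he0, hne0⟩ := hedge_ne
  have hXpos : ∀ e ∈ G.edgeFinset, 0 < esum x e := fun e he => esum_pos hc hx.1 he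
  have hYpos : ∀ e ∈ G.edgeFinset, 0 < esum y e := fun e he => esum_pos hc hy.1 he
  have hlog : ∑ e ∈ G.edgeFinset, (a * Real.log (esum x e) + b * Real.log (esum y e))
      < ∑ e ∈ G.edgeFinset, Real.log (esum (a • x + b • y) e) := by
    refine Finset.sum_lt_sum (fun e he => ?_) ⟨e0, he0, ?_⟩
    · have h := strictConcaveOn_log_Ioi.concaveOn.2 (Set.mem_Ioi.2 (hXpos e he))
        (Set.mem_Ioi.2 (hYpos e he)) ha.le hb.le hab
      rw [esum_combo]
      simpa [smul_eq_mul] using h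
    · have h := strictConcaveOn_log_Ioi.2 (Set.mem_Ioi.2 (hXpos e0 he0))
        (Set.mem_Ioi.2 (hYpos e0 he0)) hne0 ha hb hab
      rw [esum_combo]
      simpa [smul_eq_mul] using h
  have hsum : ∑ i, (a • x + b • y) i = a * (∑ i, x i) + b * (∑ i, y i) := by
    have h : ∀ i, (a • x + b • y) i = a * x i + b * y i := fun i => by simp
    simp_rw [h]
    rw [Finset.sum_add_distrib, ← Finset.mul_sum, ← Finset.mul_sum]
  rw [smul_eq_mul, smul_eq_mul, lyap_one, lyap_one, lyap_one, hsum]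
  rw [Finset.sum_add_distrib, ← Finset.mul_sum, ← Finset.mul_sum] at hlog
  have hmul := mul_lt_mul_of_pos_left hlog
    (by positivity : (0:ℝ) < 1 / (G.edgeFinset.card : ℝ))
  linarith
end

section
/- Let G be a finite, r-regular, connected, non-bipartite graph, let α = 1, and let u = (1/m,…,1/m) be the uniform measure. Then for every equilibrium v ∈ Λ with v ≠ u there exists an index i with v_i = 0 and ∂L/∂v_i(v) = -1 + (1/N) Σ_{j ∼ i} 1/(v_i + v_j) > 0; in particular every element of Λ \ {u} is an unstable equilibrium, and u is the only equilibrium with all coordinates positive. -/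
open MeasureTheory Filter Topology

/-- Symmetry of double sums over adjacent pairs. -/
lemma urn_sum_swap {m : ℕ} {G : SimpleGraph (Fin m)} [DecidableRel G.Adj]
    (f : Fin m → Fin m → ℝ) :
    ∑ i, ∑ j ∈ G.neighborFinset i, f i j = ∑ i, ∑ j ∈ G.neighborFinset i, f j i := by
  rw [Finset.sum_comm' (s' := fun j => G.neighborFinset j) (t' := Finset.univ)]
  simp [SimpleGraph.mem_neighborFinset, SimpleGraph.adj_comm]

/-- Key lemma: if `v` is nonnegative, edge sums are positive,
`∑_{j∼i} 1/(v_i+v_j) = N` whenever `v_i > 0`, and `∑_{j∼i} 1/(v_i+v_j) ≤ N` whenever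
`v_i = 0`, then `v` is uniform (for connected, regular, non-bipartite `G`). -/
lemma urn_unique_uniform {m r : ℕ} {G : SimpleGraph (Fin m)} [DecidableRel G.Adj]
    (hreg : G.IsRegularOfDegree r) (hconn : G.Connected) (hnb : ¬ G.Colorable 2)
    (v : Fin m → ℝ) (hnn : ∀ i, 0 ≤ v i)
    (hpos : ∀ i j, G.Adj i j → 0 < v i + v j)
    (heq : ∀ i, 0 < v i →
      ∑ j ∈ G.neighborFinset i, 1 / (v i + v j) = (G.edgeFinset.card : ℝ))
    (hle : ∀ i, v i = 0 →
      ∑ j ∈ G.neighborFinset i, 1 / (v i + v j) ≤ (G.edgeFinset.card : ℝ)) :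
    v = fun _ => 1 / (m : ℝ) := by
  have hm : 0 < m := by
    obtain ⟨i⟩ := hconn.nonempty
    exact i.pos
  have hmR : (0 : ℝ) < m := by exact_mod_cast hm
  set N : ℝ := (G.edgeFinset.card : ℝ) with hNdef
  have hand : (m : ℝ) * r = 2 * N := by
    have h := SimpleGraph.sum_degrees_eq_twice_card_edges G
    simp only [hreg _, Finset.sum_const, Finset.card_univ, Fintype.card_fin,
      smul_eq_mul] at h
    rw [hNdef]
    exact_mod_cast h
  set t : Fin m → ℝ := fun i => v i - 1 / m with ht
  -- rewriting the inner sums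
  have hg : ∀ i, ∑ j ∈ G.neighborFinset i, (t i + t j) / (v i + v j)
      = (2 / m) * (N - ∑ j ∈ G.neighborFinset i, 1 / (v i + v j)) := by
    intro i
    have hdeg : ((G.neighborFinset i).card : ℝ) = r := by
      rw [G.card_neighborFinset_eq_degree i, hreg i]
    have hterm : ∀ j ∈ G.neighborFinset i,
        (t i + t j) / (v i + v j) = 1 - (2 / m) * (1 / (v i + v j)) := by
      intro j hj
      have hs := hpos i j ((SimpleGraph.mem_neighborFinset G i j).mp hj)
      simp only [ht]
      field_simp
      ring
    rw [Finset.sum_congr rfl hterm, Finset.sum_sub_distrib, Finset.sum_const,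
      nsmul_eq_mul, hdeg, mul_one, ← Finset.mul_sum]
    have hr : (r : ℝ) = 2 / m * N := by
      field_simp
      linarith [hand]
    rw [hr]; ring
  -- each diagonal term is nonpositive
  have hterm0 : ∀ i, 0 ≤ -(t i * ∑ j ∈ G.neighborFinset i, (t i + t j) / (v i + v j)) := by
    intro i
    rcases (hnn i).lt_or_eq with hvi | hvi
    · rw [hg i, heq i hvi]
      simp
    · have hvi' : v i = 0 := hvi.symm
      have h1 : t i = -(1 / m) := by simp [ht, hvi']
      have h2 : 0 ≤ N - ∑ j ∈ G.neighborFinset i, 1 / (v i + v j) :=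
        sub_nonneg.mpr (hle i hvi')
      rw [hg i, h1]
      have h3 : (0 : ℝ) ≤ 2 / m * (N - ∑ j ∈ G.neighborFinset i, 1 / (v i + v j)) :=
        mul_nonneg (by positivity) h2
      have h4 := mul_nonneg (le_of_lt (by positivity : (0:ℝ) < 1 / (m:ℝ))) h3
      linarith
  have hsum_le : ∑ i, t i * ∑ j ∈ G.neighborFinset i, (t i + t j) / (v i + v j) ≤ 0 := by
    have h := Finset.sum_nonneg (fun i (_ : i ∈ Finset.univ) => hterm0 i)
    rw [Finset.sum_neg_distrib] at h
    linarith
  -- symmetrization: the Dirichlet-type sum equals twice the diagonal sum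
  have hS : ∑ i, ∑ j ∈ G.neighborFinset i, (t i + t j) ^ 2 / (v i + v j)
      = 2 * ∑ i, t i * ∑ j ∈ G.neighborFinset i, (t i + t j) / (v i + v j) := by
    have h1 : ∑ i, ∑ j ∈ G.neighborFinset i, t i * ((t i + t j) / (v i + v j))
        = ∑ i, ∑ j ∈ G.neighborFinset i, t j * ((t j + t i) / (v j + v i)) :=
      urn_sum_swap (fun i j => t i * ((t i + t j) / (v i + v j)))
    have h2 : ∀ i, ∀ j ∈ G.neighborFinset i, (t i + t j) ^ 2 / (v i + v j)
        = t i * ((t i + t j) / (v i + v j)) + t j * ((t j + t i) / (v j + v i)) := by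
      intro i j _
      ring
    calc ∑ i, ∑ j ∈ G.neighborFinset i, (t i + t j) ^ 2 / (v i + v j)
        = ∑ i, ∑ j ∈ G.neighborFinset i, (t i * ((t i + t j) / (v i + v j))
            + t j * ((t j + t i) / (v j + v i))) := by
          exact Finset.sum_congr rfl fun i _ => Finset.sum_congr rfl (h2 i)
      _ = (∑ i, ∑ j ∈ G.neighborFinset i, t i * ((t i + t j) / (v i + v j)))
            + ∑ i, ∑ j ∈ G.neighborFinset i, t j * ((t j + t i) / (v j + v i)) := by
          rw [← Finset.sum_add_distrib]
          exact Finset.sum_congr rfl fun i _ => Finset.sum_add_distrib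
      _ = 2 * ∑ i, ∑ j ∈ G.neighborFinset i, t i * ((t i + t j) / (v i + v j)) := by
          rw [← h1]; ring
      _ = 2 * ∑ i, t i * ∑ j ∈ G.neighborFinset i, (t i + t j) / (v i + v j) := by
          congr 1
          exact Finset.sum_congr rfl fun i _ => (Finset.mul_sum _ _ _).symm
  -- hence every edge term vanishes
  have hSzero : ∑ i, ∑ j ∈ G.neighborFinset i, (t i + t j) ^ 2 / (v i + v j) = 0 := by
    have hge : 0 ≤ ∑ i, ∑ j ∈ G.neighborFinset i, (t i + t j) ^ 2 / (v i + v j) := by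
      apply Finset.sum_nonneg
      intro i _
      apply Finset.sum_nonneg
      intro j hj
      exact div_nonneg (sq_nonneg _)
        (le_of_lt (hpos i j ((SimpleGraph.mem_neighborFinset G i j).mp hj)))
    have hle' : ∑ i, ∑ j ∈ G.neighborFinset i, (t i + t j) ^ 2 / (v i + v j) ≤ 0 := by
      rw [hS]; linarith
    linarith
  have hT : ∀ i j, G.Adj i j → t i + t j = 0 := by
    intro i j hij
    have inner_nonneg : ∀ i ∈ (Finset.univ : Finset (Fin m)),
        0 ≤ ∑ j ∈ G.neighborFinset i, (t i + t j) ^ 2 / (v i + v j) := by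
      intro i _
      apply Finset.sum_nonneg
      intro j hj
      exact div_nonneg (sq_nonneg _)
        (le_of_lt (hpos i j ((SimpleGraph.mem_neighborFinset G i j).mp hj)))
    have hinner := (Finset.sum_eq_zero_iff_of_nonneg inner_nonneg).mp hSzero i
      (Finset.mem_univ i)
    have term_nonneg : ∀ j ∈ G.neighborFinset i, 0 ≤ (t i + t j) ^ 2 / (v i + v j) := by
      intro j hj
      exact div_nonneg (sq_nonneg _)
        (le_of_lt (hpos i j ((SimpleGraph.mem_neighborFinset G i j).mp hj)))
    have hterm := (Finset.sum_eq_zero_iff_of_nonneg term_nonneg).mp hinner j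
      ((SimpleGraph.mem_neighborFinset G i j).mpr hij)
    have hs := hpos i j hij
    rcases div_eq_zero_iff.mp hterm with h | h
    · exact sq_eq_zero_iff.mp h
    · exact absurd h hs.ne'
  -- |t| is constant on the connected graph
  have hwalk : ∀ {i j : Fin m}, G.Walk i j → |t i| = |t j| := by
    intro i j w
    induction w with
    | nil => rfl
    | @cons a b c hab _ ih =>
      have h0 : t b = -t a := by linarith [hT a b hab]
      calc |t a| = |t b| := by rw [h0, abs_neg]
        _ = |t c| := ih
  have habs : ∀ i j, |t i| = |t j| := by
    intro i j
    obtain ⟨w⟩ := hconn.preconnected i j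
    exact hwalk w
  -- conclude that t vanishes everywhere
  have htzero : ∀ i, t i = 0 := by
    by_contra hz
    push_neg at hz
    obtain ⟨i0, hi0⟩ := hz
    have hne : ∀ i, t i ≠ 0 := by
      intro i h
      apply hi0
      have := habs i i0
      rw [h, abs_zero] at this
      exact abs_eq_zero.mp this.symm
    apply hnb
    refine ⟨SimpleGraph.Coloring.mk (fun i => if 0 < t i then 0 else 1) ?_⟩
    intro a b hab hcol
    have h0 : t b = -t a := by linarith [hT a b hab]
    rcases (hne a).lt_or_gt with hlt | hgt
    · have hb : 0 < t b := by rw [h0]; linarith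
      simp [not_lt.mpr hlt.le, hb, not_lt_of_gt hlt] at hcol
    · have hb : ¬ 0 < t b := by rw [h0]; linarith
      simp [hgt, hb] at hcol
  funext i
  have := htzero i
  simp only [ht] at this
  linarith

/-- **Lemma (regular non-bipartite, `α = 1`).** For every equilibrium `v ∈ Λ` with `v ≠ u`
(`u` the uniform measure) there is an index `i` with `v_i = 0` and `∂L/∂v_i(v) > 0`; in
particular every element of `Λ \ {u}` is unstable, and `u` is the only equilibrium with all
coordinates positive. -/
theorem regular_nonbipartite_unstable_equilibria
    {m r : ℕ} {G : SimpleGraph (Fin m)} [DecidableRel G.Adj] {c : ℝ}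
    (hreg : G.IsRegularOfDegree r) (hconn : G.Connected) (hnb : ¬ G.Colorable 2)
    (hc : 0 < c) (hcN : c < 1 / (G.edgeFinset.card : ℝ)) :
    (∀ v ∈ equilibria m G 1 c, v ≠ (fun _ => 1 / (m : ℝ)) →
      ∃ i, v i = 0 ∧ 0 < lyapGrad m G 1 v i) ∧
    (∀ v ∈ equilibria m G 1 c, (∀ i, 0 < v i) → v = fun _ => 1 / (m : ℝ)) := by
  set N : ℝ := (G.edgeFinset.card : ℝ) with hNdef
  have hN : 0 < N := by
    rcases Nat.eq_zero_or_pos G.edgeFinset.card with h | h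
    · rw [hNdef, h] at hcN
      norm_num at hcN
      linarith
    · rw [hNdef]
      exact_mod_cast h
  -- common facts for any equilibrium
  have key : ∀ v ∈ equilibria m G 1 c,
      (∀ i, 0 < v i →
        ∑ j ∈ G.neighborFinset i, 1 / (v i + v j) = N) ∧
      (∀ i, v i = 0 → lyapGrad m G 1 v i ≤ 0 →
        ∑ j ∈ G.neighborFinset i, 1 / (v i + v j) ≤ N) ∧
      (∀ i j, G.Adj i j → 0 < v i + v j) ∧ (∀ i, 0 ≤ v i) := by
    intro v hv
    obtain ⟨⟨hnn, _, hedge⟩, hF⟩ := hv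
    have hpos : ∀ i j, G.Adj i j → 0 < v i + v j := fun i j h =>
      lt_of_lt_of_le hc (hedge i j h)
    refine ⟨?_, ?_, hpos, hnn⟩
    · intro i hvi
      have hFi := congrFun hF i
      simp only [urnField, Real.rpow_one, Pi.zero_apply] at hFi
      have e2 : ∑ j ∈ G.neighborFinset i, v i / (v i + v j)
          = v i * ∑ j ∈ G.neighborFinset i, 1 / (v i + v j) := by
        rw [Finset.mul_sum]
        exact Finset.sum_congr rfl fun j _ => (mul_one_div _ _).symm
      rw [e2] at hFi
      have h1 : 1 / N * (v i * ∑ j ∈ G.neighborFinset i, 1 / (v i + v j)) = v i := by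
        linarith
      field_simp [hN.ne'] at h1
      linarith
    · intro i hvi hlyap
      have : lyapGrad m G 1 v i
          = -1 + 1 / N * ∑ j ∈ G.neighborFinset i, 1 / (v i + v j) := by
        simp only [lyapGrad, show (1 : ℝ) - 1 = 0 by norm_num, Real.rpow_zero,
          Real.rpow_one, ← hNdef]
      rw [this] at hlyap
      have h2 : (∑ j ∈ G.neighborFinset i, 1 / (v i + v j)) / N ≤ 1 := by
        rw [div_eq_inv_mul, ← one_div]
        linarith
      exact (div_le_one hN).mp h2
  constructor
  · intro v hv hne
    by_contra h
    push_neg at h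
    obtain ⟨heq, hle, hpos, hnn⟩ := key v hv
    apply hne
    exact urn_unique_uniform hreg hconn hnb v hnn hpos heq
      (fun i hi => hle i hi (h i hi))
  · intro v hv hvpos
    obtain ⟨heq, _, hpos, hnn⟩ := key v hv
    exact urn_unique_uniform hreg hconn hnb v hnn hpos heq
      (fun i hi => absurd hi (hvpos i).ne')
end

section
/- Let G be a finite, r-regular, connected, bipartite graph with bipartition V = A ∪ B, and let α = 1. Then every point of Ω is an equilibrium of F, and for every equilibrium v ∈ Λ with v ∉ Ω there exists an index i with v_i = 0 and ∂L/∂v_i(v) = -1 + (1/N) Σ_{j ∼ i} 1/(v_i + v_j) > 0; in particular every element of Λ \ Ω is an unstable equilibrium. -/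
open MeasureTheory Filter Topology

/-- The set `Ω` associated to a bipartition `V = A ∪ Aᶜ`: vectors constant equal to some
`p ≥ 0` on `A` and to some `q ≥ 0` on `Aᶜ`, with `p + q = 2/m`. -/
def bipartiteOmega (m : ℕ) (A : Finset (Fin m)) : Set (Fin m → ℝ) :=
  {x | ∃ p q : ℝ, 0 ≤ p ∧ 0 ≤ q ∧ p + q = 2 / (m : ℝ) ∧
    (∀ i, i ∈ A → x i = p) ∧ (∀ i, i ∉ A → x i = q)}

section Aux

variable {m : ℕ} {G : SimpleGraph (Fin m)} [DecidableRel G.Adj]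

lemma aux_adj_sum_comm (f : Fin m → Fin m → ℝ) :
    ∑ i, ∑ j ∈ G.neighborFinset i, f i j = ∑ j, ∑ i ∈ G.neighborFinset j, f i j := by
  have h : ∀ i : Fin m, G.neighborFinset i = Finset.univ.filter (G.Adj i) := by
    intro i; ext j; simp [SimpleGraph.mem_neighborFinset]
  simp_rw [h, Finset.sum_filter]
  rw [Finset.sum_comm]
  congr 1; ext j; congr 1; ext i
  simp [G.adj_comm]

lemma aux_mr {r : ℕ} (hreg : G.IsRegularOfDegree r) :
    m * r = 2 * G.edgeFinset.card := by
  have := G.sum_degrees_eq_twice_card_edges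
  simp only [hreg _, Finset.sum_const, smul_eq_mul, Finset.card_univ, Fintype.card_fin] at this
  omega

lemma aux_walk (A : Finset (Fin m)) (hA : ∀ i j, G.Adj i j → (i ∈ A ↔ j ∉ A))
    (v : Fin m → ℝ) (t p : ℝ) (hsum : ∀ i j, G.Adj i j → v i + v j = t)
    {a b : Fin m} (w : G.Walk a b) (ha : v a = if a ∈ A then p else t - p) :
    v b = if b ∈ A then p else t - p := by
  induction w with
  | nil => exact ha
  | @cons x y z hadj w ih =>
    apply ih
    have h1 := hsum _ _ hadj
    have h2 := hA _ _ hadj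
    by_cases hmem : x ∈ A
    · rw [if_pos hmem] at ha
      have h3 : y ∉ A := h2.mp hmem
      rw [if_neg h3]; linarith
    · rw [if_neg hmem] at ha
      have h3 : y ∈ A := by by_contra h; exact hmem (h2.mpr h)
      rw [if_pos h3]; linarith

lemma aux_edge_sum_const {m r : ℕ} {G : SimpleGraph (Fin m)} [DecidableRel G.Adj]
    (hreg : G.IsRegularOfDegree r)
    (hN : 0 < (G.edgeFinset.card : ℝ)) (v : Fin m → ℝ)
    (hsum1 : ∑ i, v i = 1)
    (hpos : ∀ i j, G.Adj i j → 0 < v i + v j)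
    (hg : ∀ i, ∑ j ∈ G.neighborFinset i, 1 / (v i + v j) ≤ (G.edgeFinset.card : ℝ)) :
    ∀ i j, G.Adj i j → v i + v j = 2 / (m : ℝ) := by
  have hmem : ∀ i j : Fin m, j ∈ G.neighborFinset i ↔ G.Adj i j := fun i j => by
    simp [SimpleGraph.mem_neighborFinset]
  have hmrR : (m : ℝ) * r = 2 * (G.edgeFinset.card : ℝ) := by exact_mod_cast aux_mr hreg
  have hm : 0 < (m : ℝ) := by
    rcases Nat.eq_zero_or_pos m with h | h
    · exfalso; subst h; push_cast at hmrR; nlinarith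
    · exact_mod_cast h
  -- the key identity for ψ
  have hid : ∀ s : ℝ, 0 < s →
      (m : ℝ)/2 * s + (2/(m:ℝ)) / s - 2 = (m:ℝ)/(2*s) * (s - 2/(m:ℝ))^2 := by
    intro s hs
    field_simp
    ring
  have hterm : ∀ i j, G.Adj i j →
      0 ≤ (m:ℝ)/2 * (v i + v j) + (2/(m:ℝ)) / (v i + v j) - 2 := by
    intro i j hadj
    rw [hid _ (hpos i j hadj)]
    have := hpos i j hadj
    positivity
  -- T1
  have hdegsum : ∀ i, ((G.neighborFinset i).card : ℝ) = r := by
    intro i; rw [G.card_neighborFinset_eq_degree, hreg i]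
  have hT1 : ∑ i, ∑ j ∈ G.neighborFinset i, (v i + v j) = 2 * r := by
    have h1 : ∑ i, ∑ j ∈ G.neighborFinset i, v i = r := by
      have : ∀ i, ∑ j ∈ G.neighborFinset i, v i = (r:ℝ) * v i := by
        intro i; rw [Finset.sum_const, nsmul_eq_mul, G.card_neighborFinset_eq_degree, hreg i]
      rw [Finset.sum_congr rfl (fun i _ => this i), ← Finset.mul_sum, hsum1, mul_one]
    have h2 : ∑ i, ∑ j ∈ G.neighborFinset i, v j = r := by
      rw [aux_adj_sum_comm (fun i j => v j)]
      exact h1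
    calc ∑ i, ∑ j ∈ G.neighborFinset i, (v i + v j)
        = ∑ i, (∑ j ∈ G.neighborFinset i, v i + ∑ j ∈ G.neighborFinset i, v j) := by
          exact Finset.sum_congr rfl fun i _ => Finset.sum_add_distrib
      _ = (∑ i, ∑ j ∈ G.neighborFinset i, v i) + ∑ i, ∑ j ∈ G.neighborFinset i, v j :=
          Finset.sum_add_distrib
      _ = 2 * r := by rw [h1, h2]; ring
  -- split S
  have hsplit : ∀ i, ∑ j ∈ G.neighborFinset i,
        ((m:ℝ)/2 * (v i + v j) + (2/(m:ℝ)) / (v i + v j) - 2)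
      = (m:ℝ)/2 * (∑ j ∈ G.neighborFinset i, (v i + v j))
        + (2/(m:ℝ)) * (∑ j ∈ G.neighborFinset i, 1/(v i + v j)) - 2 * r := by
    intro i
    rw [Finset.sum_sub_distrib, Finset.sum_add_distrib, Finset.mul_sum, Finset.mul_sum,
      Finset.sum_const, nsmul_eq_mul, G.card_neighborFinset_eq_degree, hreg i]
    congr 1
    · congr 1
      exact Finset.sum_congr rfl fun j _ => (mul_one_div _ _).symm
    · ring
  set S := ∑ i, ∑ j ∈ G.neighborFinset i,
      ((m:ℝ)/2 * (v i + v j) + (2/(m:ℝ)) / (v i + v j) - 2) with hSdef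
  have hS0 : 0 ≤ S := Finset.sum_nonneg fun i _ => Finset.sum_nonneg fun j hj =>
    hterm i j (hmem _ _ |>.mp hj)
  have hSle : S ≤ 0 := by
    have hgle : ∑ i, ∑ j ∈ G.neighborFinset i, 1/(v i + v j)
        ≤ (m:ℝ) * (G.edgeFinset.card : ℝ) := by
      calc ∑ i, ∑ j ∈ G.neighborFinset i, 1/(v i + v j)
          ≤ ∑ _i : Fin m, (G.edgeFinset.card : ℝ) := Finset.sum_le_sum fun i _ => hg i
        _ = (m:ℝ) * (G.edgeFinset.card : ℝ) := by
            rw [Finset.sum_const, nsmul_eq_mul, Finset.card_univ, Fintype.card_fin]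
    have hcoef : (0:ℝ) ≤ 2/(m:ℝ) := by positivity
    have := mul_le_mul_of_nonneg_left hgle hcoef
    have h2m : (2/(m:ℝ)) * ((m:ℝ) * (G.edgeFinset.card : ℝ)) = 2 * (G.edgeFinset.card : ℝ) := by
      field_simp
    calc S = ∑ i, ((m:ℝ)/2 * (∑ j ∈ G.neighborFinset i, (v i + v j))
          + (2/(m:ℝ)) * (∑ j ∈ G.neighborFinset i, 1/(v i + v j)) - 2 * r) :=
        Finset.sum_congr rfl fun i _ => hsplit i
      _ = (m:ℝ)/2 * (∑ i, ∑ j ∈ G.neighborFinset i, (v i + v j))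
          + (2/(m:ℝ)) * (∑ i, ∑ j ∈ G.neighborFinset i, 1/(v i + v j))
          - (m:ℝ) * (2 * r) := by
        rw [Finset.sum_sub_distrib, Finset.sum_add_distrib, ← Finset.mul_sum, ← Finset.mul_sum,
          Finset.sum_const, nsmul_eq_mul, Finset.card_univ, Fintype.card_fin]
        try ring
      _ ≤ (m:ℝ)/2 * (2 * r) + 2 * (G.edgeFinset.card : ℝ) - (m:ℝ) * (2 * r) := by
        rw [hT1]
        linarith [this, h2m]
      _ = 0 := by linarith [hmrR]
  have hSeq : S = 0 := le_antisymm hSle hS0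
  intro i j hadj
  have houter := (Finset.sum_eq_zero_iff_of_nonneg
    (fun i (_ : i ∈ Finset.univ) => Finset.sum_nonneg fun j hj =>
      hterm i j (hmem _ _ |>.mp hj))).mp hSeq i (Finset.mem_univ i)
  have hinner := (Finset.sum_eq_zero_iff_of_nonneg
    (fun j hj => hterm i j (hmem _ _ |>.mp hj))).mp houter j
    ((hmem _ _).mpr hadj)
  rw [hid _ (hpos i j hadj)] at hinner
  have hcoef : (0:ℝ) < (m:ℝ)/(2*(v i + v j)) := by
    have := hpos i j hadj; positivity
  have hsq : (v i + v j - 2/(m:ℝ))^2 = 0 := by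
    rcases mul_eq_zero.mp hinner with h | h
    · exact absurd h (ne_of_gt hcoef)
    · exact h
  have := pow_eq_zero_iff (n := 2) (by norm_num) |>.mp hsq
  linarith

end Aux

/-- **Lemma (regular bipartite, `α = 1`).** Every point of `Ω` is an equilibrium of `F`, and
for every equilibrium `v ∈ Λ` with `v ∉ Ω` there is an index `i` with `v_i = 0` and
`∂L/∂v_i(v) > 0`; in particular every element of `Λ \ Ω` is unstable. -/
theorem regular_bipartite_unstable_equilibria
    {m r : ℕ} {G : SimpleGraph (Fin m)} [DecidableRel G.Adj] {c : ℝ}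
    (hreg : G.IsRegularOfDegree r) (hconn : G.Connected)
    (A : Finset (Fin m)) (hA : ∀ i j, G.Adj i j → (i ∈ A ↔ j ∉ A))
    (hc : 0 < c) (hcN : c < 1 / (G.edgeFinset.card : ℝ)) :
    (∀ v ∈ bipartiteOmega m A, v ∈ equilibria m G 1 c) ∧
    (∀ v ∈ equilibria m G 1 c, v ∉ bipartiteOmega m A →
      ∃ i, v i = 0 ∧ 0 < lyapGrad m G 1 v i) := by
  classical
  have hmem : ∀ i j : Fin m, j ∈ G.neighborFinset i ↔ G.Adj i j := fun i j => by
    simp [SimpleGraph.mem_neighborFinset]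
  have hNpos : 0 < (G.edgeFinset.card : ℝ) := by
    rcases Nat.eq_zero_or_pos G.edgeFinset.card with h | h
    · rw [h] at hcN; norm_num at hcN; linarith
    · exact_mod_cast h
  have hmr := aux_mr hreg
  have hcardpos : 0 < G.edgeFinset.card := by exact_mod_cast hNpos
  have hm0 : 0 < m := by
    rcases Nat.eq_zero_or_pos m with h | h
    · subst h; omega
    · exact h
  have hr0 : 0 < r := by
    rcases Nat.eq_zero_or_pos r with h | h
    · subst h; omega
    · exact h
  have hmR : 0 < (m : ℝ) := by exact_mod_cast hm0
  have hrR : (1:ℝ) ≤ (r : ℝ) := by exact_mod_cast hr0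
  have hmrR : (m : ℝ) * r = 2 * (G.edgeFinset.card : ℝ) := by exact_mod_cast hmr
  have hrN : (r:ℝ) * ((m:ℝ)/2) = (G.edgeFinset.card : ℝ) := by linarith
  -- cardinality of A
  have hAcard : 2 * A.card = m := by
    have hswap := aux_adj_sum_comm (G := G) (fun _ j => if j ∈ A then (1:ℝ) else 0)
    have hLi : ∀ i : Fin m, ∑ j ∈ G.neighborFinset i, (if j ∈ A then (1:ℝ) else 0)
        = if i ∈ A then 0 else (r:ℝ) := by
      intro i; by_cases hi : i ∈ A
      · rw [if_pos hi]
        exact Finset.sum_eq_zero fun j hj => if_neg ((hA i j ((hmem i j).mp hj)).mp hi)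
      · rw [if_neg hi]
        have h1 : ∀ j ∈ G.neighborFinset i, (if j ∈ A then (1:ℝ) else 0) = 1 := by
          intro j hj
          have hj' := (hmem i j).mp hj
          have : j ∈ A := by by_contra h; exact hi ((hA i j hj').mpr h)
          rw [if_pos this]
        rw [Finset.sum_congr rfl h1, Finset.sum_const, nsmul_eq_mul,
          SimpleGraph.card_neighborFinset_eq_degree, hreg i, mul_one]
    have hRj : ∀ j : Fin m, ∑ i ∈ G.neighborFinset j, (if j ∈ A then (1:ℝ) else 0)
        = (r:ℝ) * (if j ∈ A then 1 else 0) := by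
      intro j
      rw [Finset.sum_const, nsmul_eq_mul, SimpleGraph.card_neighborFinset_eq_degree, hreg j]
    rw [Finset.sum_congr rfl fun i _ => hLi i, Finset.sum_congr rfl fun j _ => hRj j] at hswap
    have hone : ∑ j : Fin m, (if j ∈ A then (1:ℝ) else 0) = (A.card : ℝ) := by
      simp [Finset.sum_ite_mem]
    have hL2 : ∑ i : Fin m, (if i ∈ A then (0:ℝ) else (r:ℝ))
        = (m:ℝ) * r - (r:ℝ) * (A.card : ℝ) := by
      have : ∀ i : Fin m, (if i ∈ A then (0:ℝ) else (r:ℝ))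
          = (r:ℝ) - (r:ℝ) * (if i ∈ A then (1:ℝ) else 0) := by
        intro i; by_cases h : i ∈ A <;> simp [h]
      rw [Finset.sum_congr rfl fun i _ => this i, Finset.sum_sub_distrib, ← Finset.mul_sum,
        hone, Finset.sum_const, nsmul_eq_mul, Finset.card_univ, Fintype.card_fin]
      try ring
    rw [hL2, ← Finset.mul_sum, hone] at hswap
    have hrpos : (0:ℝ) < (r:ℝ) := by linarith
    have : (m:ℝ) = 2 * (A.card : ℝ) := by
      have h2 : (m:ℝ) * r = 2 * ((A.card : ℝ) * r) := by nlinarith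
      have := mul_right_cancel₀ (ne_of_gt hrpos) (by linarith : (m:ℝ) * r = (2 * (A.card:ℝ)) * r)
      linarith
    exact_mod_cast this.symm
  have hAhalf : (A.card : ℝ) = (m:ℝ) / 2 := by
    have : ((2 * A.card : ℕ) : ℝ) = (m : ℝ) := by exact_mod_cast congrArg Nat.cast hAcard
    push_cast at this; linarith
  have h1N2m : 1 / (G.edgeFinset.card : ℝ) ≤ 2 / (m : ℝ) := by
    rw [div_le_div_iff₀ hNpos hmR]
    nlinarith
  constructor
  · -- Part 1: Ω ⊆ Λ
    rintro v ⟨p, q, hp, hq, hpq, hvA, hvB⟩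
    have hvi : ∀ i j, G.Adj i j → v i + v j = 2 / (m:ℝ) := by
      intro i j hadj
      by_cases hi : i ∈ A
      · rw [hvA i hi, hvB j ((hA i j hadj).mp hi)]; exact hpq
      · rw [hvB i hi, hvA j (by by_contra h; exact hi ((hA i j hadj).mpr h))]; linarith
    refine ⟨⟨fun i => ?_, ?_, fun i j hadj => ?_⟩, ?_⟩
    · by_cases hi : i ∈ A
      · rw [hvA i hi]; exact hp
      · rw [hvB i hi]; exact hq
    · have hvite : ∀ i : Fin m, v i = if i ∈ A then p else q := by
        intro i; by_cases hi : i ∈ A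
        · rw [if_pos hi]; exact hvA i hi
        · rw [if_neg hi]; exact hvB i hi
      have hsplit : ∀ i : Fin m, (if i ∈ A then p else q)
          = q + (if i ∈ A then (1:ℝ) else 0) * (p - q) := by
        intro i; by_cases hi : i ∈ A <;> simp [hi]
      have hone : ∑ j : Fin m, (if j ∈ A then (1:ℝ) else 0) = (A.card : ℝ) := by
        simp [Finset.sum_ite_mem]
      rw [Finset.sum_congr rfl fun i _ => hvite i,
        Finset.sum_congr rfl fun i _ => hsplit i, Finset.sum_add_distrib,
        Finset.sum_const, nsmul_eq_mul, Finset.card_univ, Fintype.card_fin,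
        ← Finset.sum_mul, hone, hAhalf]
      have hpq' : (m:ℝ) * (p + q) = 2 := by
        rw [hpq]; field_simp
      field_simp
      linear_combination hpq'
    · rw [hvi i j hadj]
      linarith [hcN, h1N2m]
    · funext i
      simp only [urnField, Real.rpow_one]
      have hterm : ∀ j ∈ G.neighborFinset i, v i / (v i + v j) = v i * ((m:ℝ)/2) := by
        intro j hj
        rw [hvi i j ((hmem i j).mp hj), div_div_eq_mul_div, mul_div_assoc]
      rw [Finset.sum_congr rfl hterm, Finset.sum_const, nsmul_eq_mul,
        SimpleGraph.card_neighborFinset_eq_degree, hreg i]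
      have : (r:ℝ) * (v i * ((m:ℝ)/2)) = v i * (G.edgeFinset.card : ℝ) := by
        rw [← hrN]; ring
      rw [this]
      have hc2 : (1:ℝ) / (G.edgeFinset.card:ℝ) * (v i * (G.edgeFinset.card:ℝ)) = v i := by
        rw [mul_comm (v i), ← mul_assoc, one_div_mul_cancel (ne_of_gt hNpos), one_mul]
      rw [hc2]; simp
  · -- Part 2
    rintro v ⟨⟨hv0, hv1, hvc⟩, heq⟩ hvO
    by_contra hno
    push_neg at hno
    have hpos : ∀ i j, G.Adj i j → 0 < v i + v j := fun i j h => lt_of_lt_of_le hc (hvc i j h)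
    have hg : ∀ i, ∑ j ∈ G.neighborFinset i, 1 / (v i + v j) ≤ (G.edgeFinset.card : ℝ) := by
      intro i
      have heqi : urnField m G 1 v i = 0 := by rw [heq]; rfl
      simp only [urnField, Real.rpow_one] at heqi
      have hcancel : ∀ X : ℝ, (G.edgeFinset.card:ℝ) * ((1/(G.edgeFinset.card:ℝ)) * X) = X := by
        intro X; rw [← mul_assoc, mul_one_div, div_self (ne_of_gt hNpos), one_mul]
      rcases eq_or_lt_of_le (hv0 i) with h0 | h0
      · have hl := hno i h0.symm
        simp only [lyapGrad, sub_self, Real.rpow_zero, Real.rpow_one] at hl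
        have h1 : (1/(G.edgeFinset.card:ℝ)) * ∑ j ∈ G.neighborFinset i, 1/(v i + v j) ≤ 1 := by
          linarith
        calc ∑ j ∈ G.neighborFinset i, 1/(v i + v j)
            = (G.edgeFinset.card:ℝ) * ((1/(G.edgeFinset.card:ℝ))
              * ∑ j ∈ G.neighborFinset i, 1/(v i + v j)) := (hcancel _).symm
          _ ≤ (G.edgeFinset.card:ℝ) * 1 := mul_le_mul_of_nonneg_left h1 (le_of_lt hNpos)
          _ = (G.edgeFinset.card:ℝ) := mul_one _
      · have hrw : ∑ j ∈ G.neighborFinset i, v i / (v i + v j)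
            = v i * ∑ j ∈ G.neighborFinset i, 1 / (v i + v j) := by
          rw [Finset.mul_sum]
          exact Finset.sum_congr rfl fun j _ => (mul_one_div _ _).symm
        rw [hrw] at heqi
        have h1 : (1/(G.edgeFinset.card:ℝ))
            * (v i * ∑ j ∈ G.neighborFinset i, 1/(v i+v j)) = v i := by linarith
        have h2 : v i * ∑ j ∈ G.neighborFinset i, 1/(v i+v j)
            = v i * (G.edgeFinset.card:ℝ) := by
          calc v i * ∑ j ∈ G.neighborFinset i, 1/(v i+v j)
              = (G.edgeFinset.card:ℝ) * ((1/(G.edgeFinset.card:ℝ))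
                * (v i * ∑ j ∈ G.neighborFinset i, 1/(v i+v j))) := (hcancel _).symm
            _ = (G.edgeFinset.card:ℝ) * v i := by rw [h1]
            _ = v i * (G.edgeFinset.card:ℝ) := mul_comm _ _
        exact le_of_eq (mul_left_cancel₀ (ne_of_gt h0) h2)
    have hedge := aux_edge_sum_const hreg hNpos v hv1 hpos hg
    apply hvO
    obtain ⟨i1, j1, hadj1, hi1A⟩ : ∃ i j, G.Adj i j ∧ i ∈ A := by
      obtain ⟨e, he⟩ := Finset.card_pos.mp hcardpos
      induction e using Sym2.ind with
      | _ a b =>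
        have hab : G.Adj a b := SimpleGraph.mem_edgeFinset.mp he
        by_cases h : a ∈ A
        · exact ⟨a, b, hab, h⟩
        · exact ⟨b, a, hab.symm, by
            have := hA a b hab; by_contra hb; exact h (by tauto)⟩
    refine ⟨v i1, 2/(m:ℝ) - v i1, hv0 i1, ?_, by ring, ?_, ?_⟩
    · have := hedge _ _ hadj1; linarith [hv0 j1]
    · intro i hiA
      have := aux_walk A hA v (2/(m:ℝ)) (v i1) hedge ((hconn i1 i).some)
        (by rw [if_pos hi1A])
      rw [if_pos hiA] at this; exact this
    · intro i hiA
      have := aux_walk A hA v (2/(m:ℝ)) (v i1) hedge ((hconn i1 i).some)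
        (by rw [if_pos hi1A])
      rw [if_neg hiA] at this; exact this
end
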